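/- For every session contract σ, the set of session contracts reachable from σ under the reflexive–transitive closure of its labelled transition system (τ-steps and action-labelled steps, with recursion unfolded equi-recursively) is finite. -/

import Mathlib

/-! Core formalisation: session contracts, session orchestrators, orchestrated systems,
    buffers, (finite and infinite) sequences of orchestration actions, respectfulness,
    and the compliance relations. Names are natural numbers. Recursion binders use
    de Bruijn indices (`var n`, with `mu` binding index 0); equi-recursive identification
    of `rec x.σ` with its unfolding is realised by unfolding rules in the LTSs. -/

abbrev Name := ℕ

/-- Actions of session contracts: an input `a` or an output `ā`. -/
inductive Act : Type where
  | inp : Name → Act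
  | out : Name → Act
deriving DecidableEq

/-- Orchestration actions:
    `cIn a` = ⟨a,ε⟩, `cSync a` = ⟨a,ā⟩ (category ι_L);
    `sIn a` = ⟨ε,a⟩, `sSync a` = ⟨ā,a⟩ (category ι_R);
    `cOut a` = ⟨ā,ε⟩, `sOut a` = ⟨ε,ā⟩ (category o). -/
inductive OAct : Type where
  | cIn   : Name → OAct
  | cSync : Name → OAct
  | sIn   : Name → OAct
  | sSync : Name → OAct
  | cOut  : Name → OAct
  | sOut  : Name → OAct
deriving DecidableEq

def OAct.catL : OAct → Prop
  | .cIn _ => True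
  | .cSync _ => True
  | _ => False

def OAct.catR : OAct → Prop
  | .sIn _ => True
  | .sSync _ => True
  | _ => False

def OAct.catO : OAct → Prop
  | .cOut _ => True
  | .sOut _ => True
  | _ => False

/-- Raw session contracts: `one` = 1 (success), `ext l` = external choice a₁.σ₁+⋯+aₙ.σₙ,
    `int l` = internal choice ā₁.σ₁⊕⋯⊕āₙ.σₙ, de Bruijn variables and recursion. -/
inductive SC : Type where
  | one : SC
  | ext : List (Name × SC) → SC
  | int : List (Name × SC) → SC
  | var : ℕ → SC
  | mu : SC → SC

namespace SC

/-- Substitution of the (closed) term `u` for the variable of de Bruijn index `k`. -/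
def subst (u : SC) : SC → ℕ → SC
  | SC.one, _ => SC.one
  | SC.ext l, k => SC.ext (l.attach.map fun p => (p.1.1, subst u p.1.2 k))
  | SC.int l, k => SC.int (l.attach.map fun p => (p.1.1, subst u p.1.2 k))
  | SC.var x, k => if x = k then u else SC.var x
  | SC.mu b, k => SC.mu (subst u b (k + 1))
termination_by s _ => sizeOf s
decreasing_by
  · obtain ⟨⟨a1, s1⟩, hp⟩ := p
    have := List.sizeOf_lt_of_mem hp
    simp_wf; simp at this; omega
  · obtain ⟨⟨a1, s1⟩, hp⟩ := p
    have := List.sizeOf_lt_of_mem hp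
    simp_wf; simp at this; omega
  · simp_wf

/-- One-step unfolding of a recursive contract: `rec x.σ  ↦  σ[rec x.σ / x]`. -/
def unfold (b : SC) : SC := subst (SC.mu b) b 0

/-- All free de Bruijn indices are `< n`. -/
inductive ClosedAbove : SC → ℕ → Prop where
  | one : ∀ n, ClosedAbove .one n
  | ext : ∀ l n, (∀ p ∈ l, ClosedAbove p.2 n) → ClosedAbove (.ext l) n
  | int : ∀ l n, (∀ p ∈ l, ClosedAbove p.2 n) → ClosedAbove (.int l) n
  | var : ∀ x n, x < n → ClosedAbove (.var x) n
  | mu : ∀ b n, ClosedAbove b (n + 1) → ClosedAbove (.mu b) n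

/-- Structural well-formedness: choices are nonempty with pairwise distinct names,
    and recursion bodies are not variables (contractiveness). -/
inductive WF : SC → Prop where
  | one : WF .one
  | ext : ∀ l, l ≠ [] → (l.map Prod.fst).Nodup → (∀ p ∈ l, WF p.2) → WF (.ext l)
  | int : ∀ l, l ≠ [] → (l.map Prod.fst).Nodup → (∀ p ∈ l, WF p.2) → WF (.int l)
  | var : ∀ x, WF (.var x)
  | mu : ∀ b, (∀ x, b ≠ .var x) → WF b → WF (.mu b)

/-- τ-transitions of session contracts (with equi-recursive unfolding). -/
inductive Tau : SC → SC → Prop where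
  | int : ∀ l p, p ∈ l → Tau (SC.int l) (SC.int [p])
  | unfold : ∀ b σ', Tau b.unfold σ' → Tau (SC.mu b) σ'

/-- Labelled transitions of session contracts (with equi-recursive unfolding). -/
inductive Step : SC → Act → SC → Prop where
  | ext : ∀ l a σ, (a, σ) ∈ l → Step (SC.ext l) (Act.inp a) σ
  | out : ∀ a σ, Step (SC.int [(a, σ)]) (Act.out a) σ
  | unfold : ∀ b α σ', Step b.unfold α σ' → Step (SC.mu b) α σ'

end SC

/-- `σ` is a session contract: a closed, well-formed raw session contract. -/
def IsContract (σ : SC) : Prop := σ.ClosedAbove 0 ∧ σ.WF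

/-- Raw session orchestrators: `one` = 1, `choice l` = μ₁.f₁ ∨ ⋯ ∨ μₙ.fₙ,
    de Bruijn variables and recursion. -/
inductive Orch : Type where
  | one : Orch
  | choice : List (OAct × Orch) → Orch
  | var : ℕ → Orch
  | mu : Orch → Orch

namespace Orch

/-- Simultaneous substitution of the (closed) orchestrators `θ` for the free variables. -/
def msubst : Orch → List Orch → Orch
  | .one, _ => .one
  | .choice l, θ => .choice (l.attach.map fun p => (p.1.1, msubst p.1.2 θ))
  | .var x, θ => θ.getD x (.var x)
  | .mu b, θ => .mu (msubst b (Orch.var 0 :: θ))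
termination_by f _ => sizeOf f
decreasing_by
  · obtain ⟨⟨a1, s1⟩, hp⟩ := p
    have := List.sizeOf_lt_of_mem hp
    simp_wf; simp at this; omega
  · simp_wf

/-- One-step unfolding of a recursive orchestrator. -/
def unfold (b : Orch) : Orch := msubst b [Orch.mu b]

inductive ClosedAbove : Orch → ℕ → Prop where
  | one : ∀ n, ClosedAbove .one n
  | choice : ∀ l n, (∀ p ∈ l, ClosedAbove p.2 n) → ClosedAbove (.choice l) n
  | var : ∀ x n, x < n → ClosedAbove (.var x) n
  | mu : ∀ b n, ClosedAbove b (n + 1) → ClosedAbove (.mu b) n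

/-- Structural well-formedness of orchestrators: every choice is nonempty and either all
    its prefixes are of category ι_L, or all of category ι_R, or it is a single prefix of
    category o; recursion bodies are not variables. -/
inductive WF : Orch → Prop where
  | one : WF .one
  | choice : ∀ l, l ≠ [] →
      ((∀ p ∈ l, OAct.catL p.1) ∨ (∀ p ∈ l, OAct.catR p.1) ∨
        (∃ μ g, OAct.catO μ ∧ l = [(μ, g)])) →
      (∀ p ∈ l, WF p.2) → WF (.choice l)
  | var : ∀ x, WF (.var x)
  | mu : ∀ b, (∀ x, b ≠ .var x) → WF b → WF (.mu b)

/-- LTS of orchestrators (with equi-recursive unfolding). -/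
inductive Step : Orch → OAct → Orch → Prop where
  | pre : ∀ l μ g, (μ, g) ∈ l → Step (Orch.choice l) μ g
  | unfold : ∀ b μ g, Step b.unfold μ g → Step (Orch.mu b) μ g

/-- Finite traces of an orchestrator. -/
inductive Trace : Orch → List OAct → Orch → Prop where
  | nil : ∀ f, Trace f [] f
  | cons : ∀ f μ g ms h, Step f μ g → Trace g ms h → Trace f (μ :: ms) h

def NoStep (f : Orch) : Prop := ¬ ∃ μ g, Step f μ g

end Orch

/-- `f` is a session orchestrator: closed and well-formed. -/
def IsOrch (f : Orch) : Prop := f.ClosedAbove 0 ∧ f.WF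

/-! ### Orchestrated systems ρ ∥_f σ -/

abbrev Conf := SC × Orch × SC

namespace Sys

/-- Internal (τ) steps of an orchestrated system. -/
inductive Tau : Conf → Conf → Prop where
  | client : ∀ ρ ρ' f σ, SC.Tau ρ ρ' → Tau (ρ, f, σ) (ρ', f, σ)
  | server : ∀ ρ f σ σ', SC.Tau σ σ' → Tau (ρ, f, σ) (ρ, f, σ')

/-- Steps of an orchestrated system, labelled by the orchestration action performed. -/
inductive Step : Conf → OAct → Conf → Prop where
  | syncCS : ∀ ρ ρ' f f' σ σ' a, SC.Step ρ (Act.out a) ρ' → Orch.Step f (OAct.cSync a) f' →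
      SC.Step σ (Act.inp a) σ' → Step (ρ, f, σ) (OAct.cSync a) (ρ', f', σ')
  | syncSC : ∀ ρ ρ' f f' σ σ' a, SC.Step ρ (Act.inp a) ρ' → Orch.Step f (OAct.sSync a) f' →
      SC.Step σ (Act.out a) σ' → Step (ρ, f, σ) (OAct.sSync a) (ρ', f', σ')
  | cIn : ∀ ρ ρ' f f' σ a, SC.Step ρ (Act.out a) ρ' → Orch.Step f (OAct.cIn a) f' →
      Step (ρ, f, σ) (OAct.cIn a) (ρ', f', σ)
  | cOut : ∀ ρ ρ' f f' σ a, SC.Step ρ (Act.inp a) ρ' → Orch.Step f (OAct.cOut a) f' →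
      Step (ρ, f, σ) (OAct.cOut a) (ρ', f', σ)
  | sIn : ∀ ρ f f' σ σ' a, Orch.Step f (OAct.sIn a) f' → SC.Step σ (Act.out a) σ' →
      Step (ρ, f, σ) (OAct.sIn a) (ρ, f', σ')
  | sOut : ∀ ρ f f' σ σ' a, Orch.Step f (OAct.sOut a) f' → SC.Step σ (Act.inp a) σ' →
      Step (ρ, f, σ) (OAct.sOut a) (ρ, f', σ')

/-- Any number of τ-steps. -/
def TauRT : Conf → Conf → Prop := Relation.ReflTransGen Tau

/-- Weak labelled step `⟹^μ`. -/
def WStep (c : Conf) (μ : OAct) (c' : Conf) : Prop :=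
  ∃ c₁ c₂, TauRT c c₁ ∧ Step c₁ μ c₂ ∧ TauRT c₂ c'

/-- `Exec c ms c'`: the system performs the finite sequence `ms` of orchestration
    actions (interspersed with τ-steps), i.e. `c ⟹^{ms} c'`. -/
inductive Exec : Conf → List OAct → Conf → Prop where
  | nil : ∀ c c', TauRT c c' → Exec c [] c'
  | cons : ∀ c c₁ c₂ μ ms c', TauRT c c₁ → Step c₁ μ c₂ → Exec c₂ ms c' →
      Exec c (μ :: ms) c'

/-- Infinite executions along the infinite sequence `s` of orchestration actions. -/
def InfExec (c : Conf) (s : ℕ → OAct) : Prop :=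
  ∃ cs : ℕ → Conf, cs 0 = c ∧ ∀ n, WStep (cs n) (s n) (cs (n + 1))

/-- `c ↛`: no τ-step and no labelled step is possible. -/
def Stuck (c : Conf) : Prop := (¬ ∃ c', Tau c c') ∧ (¬ ∃ μ c', Step c μ c')

end Sys

/-- `f` is ρ·σ strict: every finite trace of `f` can be performed by the
    orchestrated system ρ ∥_f σ. -/
def Strict (ρ : SC) (f : Orch) (σ : SC) : Prop :=
  ∀ ms g, Orch.Trace f ms g → ∃ c', Sys.Exec (ρ, f, σ) ms c'

/-- Disrespectful strict compliance `f : ρ ⊣⊩ᵈˢ σ`. -/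
def DSCompliant (f : Orch) (ρ σ : SC) : Prop :=
  Strict ρ f σ ∧
  ∀ ms ρ' f' σ', Sys.Exec (ρ, f, σ) ms (ρ', f', σ') → Sys.Stuck (ρ', f', σ') → ρ' = SC.one

/-! ### Buffers and respectfulness -/

/-- The contribution of one orchestration action to the two buffer counters
    (client-to-server, server-to-client) for the name `a`. -/
def OAct.delta : OAct → Name → ℤ × ℤ
  | .cIn b, a => (if b = a then 1 else 0, 0)
  | .cOut b, a => (if b = a then -1 else 0, 0)
  | .sIn b, a => (0, if b = a then 1 else 0)
  | .sOut b, a => (0, if b = a then -1 else 0)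
  | _, _ => (0, 0)

/-- The state of the (initially empty) buffer for name `a` after the finite sequence
    `ms`: `(client-to-server count, server-to-client count)`. -/
def bufCount (ms : List OAct) (a : Name) : ℤ × ℤ :=
  ((ms.map fun μ => (μ.delta a).1).sum, (ms.map fun μ => (μ.delta a).2).sum)

/-- The actions kept by the left-restriction `μ⃗↾ₐ`: exactly ⟨ε,ā⟩ and ⟨a,ε⟩. -/
def OAct.keepA (a : Name) (μ : OAct) : Prop := μ = OAct.sOut a ∨ μ = OAct.cIn a

def OAct.isSIn : OAct → Prop
  | .sIn _ => True
  | _ => False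

/-- A finite or infinite sequence of orchestration actions. -/
inductive OSeq : Type where
  | fin : List OAct → OSeq
  | inf : (ℕ → OAct) → OSeq

namespace OSeq

/-- The finite prefixes of a sequence. -/
def prefixes : OSeq → Set (List OAct)
  | .fin l => {t | t <+: l}
  | .inf s => {t | ∃ n, t = (List.range n).map s}

/-- Soundness: along every prefix, both buffer counts of every name stay ≥ 0. -/
def Sound (v : OSeq) : Prop :=
  ∀ t ∈ v.prefixes, ∀ a, 0 ≤ (bufCount t a).1 ∧ 0 ≤ (bufCount t a).2

/-- The left-restriction `μ⃗↾ₐ` is finite. -/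
def restrFinite : OSeq → Name → Prop
  | .fin _, _ => True
  | .inf s, a => ∃ N, ∀ n, N ≤ n → ¬ OAct.keepA a (s n)

/-- "After all of μ⃗ the client-to-server count of `a` is 0." -/
def csFinalZero : OSeq → Name → Prop
  | .fin l, a => (bufCount l a).1 = 0
  | .inf s, a => ∃ N, ∀ n, N ≤ n → (bufCount ((List.range n).map s) a).1 = 0

/-- The left-restriction `μ⃗↾ₐ` is definitely-⟨a,ε⟩: from some point on, every element
    of μ⃗ kept by the restriction is ⟨a,ε⟩. -/
def defCIn : OSeq → Name → Prop
  | .fin _, _ => True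
  | .inf s, a => ∃ N, ∀ n, N ≤ n → OAct.keepA a (s n) → s n = OAct.cIn a

/-- Client-respectfulness of a sequence. -/
def ClientRespectful (v : OSeq) : Prop :=
  ∀ a, (v.restrFinite a ∧ v.csFinalZero a) ∨ (¬ v.restrFinite a ∧ ¬ v.defCIn a)

/-- Non-definitely server-inputted sequences. -/
def NonDefSI : OSeq → Prop
  | .fin _ => True
  | .inf s => ¬ ∃ N, ∀ n, N ≤ n → OAct.isSIn (s n)

/-- Respectful sequences. -/
def Respectful (v : OSeq) : Prop := v.Sound ∧ v.ClientRespectful ∧ v.NonDefSI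

end OSeq

/-- Maximal traces of an orchestrator: finite traces ending in an orchestrator without
    transitions, and infinite traces. -/
def Orch.MaxTrace (f : Orch) : OSeq → Prop
  | .fin ms => ∃ g, Orch.Trace f ms g ∧ g.NoStep
  | .inf s => ∃ fs : ℕ → Orch, fs 0 = f ∧ ∀ n, Orch.Step (fs n) (s n) (fs (n + 1))

/-- A respectful orchestrator: all its maximal traces are respectful. -/
def Orch.Respectful (f : Orch) : Prop := ∀ v, f.MaxTrace v → v.Respectful

/-- Orchestrated session compliance `f : ρ ⊣⊩ σ`. -/
def Compliant (f : Orch) (ρ σ : SC) : Prop :=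
  (∀ ms ρ' f' σ', Sys.Exec (ρ, f, σ) ms (ρ', f', σ') → Sys.Stuck (ρ', f', σ') →
      ρ' = SC.one ∧ OSeq.Respectful (.fin ms)) ∧
  (∀ s : ℕ → OAct, Sys.InfExec (ρ, f, σ) s → OSeq.Respectful (.inf s))

/-- `ρ ⊣⊩ σ`: some session orchestrator makes `ρ` compliant with `σ`. -/
def Comply (ρ σ : SC) : Prop := ∃ f, IsOrch f ∧ Compliant f ρ σ

/-- `ρ ⊣⊩ᵈˢ σ`. -/
def DSComply (ρ σ : SC) : Prop := ∃ f, IsOrch f ∧ DSCompliant f ρ σ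
/-- The union of the τ-transition relation and the action-labelled transition relations
of session contracts. -/
inductive SC.AnyStep : SC → SC → Prop where
  | tau : ∀ σ σ', SC.Tau σ σ' → SC.AnyStep σ σ'
  | act : ∀ σ α σ', SC.Step σ α σ' → SC.AnyStep σ σ'

namespace SC

/-- Parallel substitution of closed terms `ρ` for variables `k, k+1, …`. -/
def msub : SC → List SC → ℕ → SC
  | .one, _, _ => .one
  | .ext l, ρ, k => .ext (l.attach.map fun p => (p.1.1, msub p.1.2 ρ k))
  | .int l, ρ, k => .int (l.attach.map fun p => (p.1.1, msub p.1.2 ρ k))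
  | .var x, ρ, k => if x < k then .var x else ρ.getD (x - k) (.var x)
  | .mu b, ρ, k => .mu (msub b ρ (k + 1))
termination_by t _ _ => sizeOf t
decreasing_by
  · obtain ⟨⟨a1, s1⟩, hp⟩ := p
    have := List.sizeOf_lt_of_mem hp
    simp_wf; simp at this; omega
  · obtain ⟨⟨a1, s1⟩, hp⟩ := p
    have := List.sizeOf_lt_of_mem hp
    simp_wf; simp at this; omega
  · simp_wf

theorem msub_one (ρ k) : msub .one ρ k = .one := by rw [msub]

theorem msub_ext (l ρ k) :
    msub (.ext l) ρ k = .ext (l.map fun p => (p.1, msub p.2 ρ k)) := by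
  rw [msub]; rw [List.attach_map_val (l := l) (f := fun p => (p.1, msub p.2 ρ k))]

theorem msub_int (l ρ k) :
    msub (.int l) ρ k = .int (l.map fun p => (p.1, msub p.2 ρ k)) := by
  rw [msub]; rw [List.attach_map_val (l := l) (f := fun p => (p.1, msub p.2 ρ k))]

theorem msub_var (x ρ k) :
    msub (.var x) ρ k = if x < k then .var x else ρ.getD (x - k) (.var x) := by rw [msub]

theorem msub_mu (b ρ k) : msub (.mu b) ρ k = .mu (msub b ρ (k + 1)) := by rw [msub]

theorem subst_ext (u l k) :
    subst u (.ext l) k = .ext (l.map fun p => (p.1, subst u p.2 k)) := by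
  rw [subst]; rw [List.attach_map_val (l := l) (f := fun p => (p.1, subst u p.2 k))]

theorem subst_int (u l k) :
    subst u (.int l) k = .int (l.map fun p => (p.1, subst u p.2 k)) := by
  rw [subst]; rw [List.attach_map_val (l := l) (f := fun p => (p.1, subst u p.2 k))]

theorem subst_var (u x k) : subst u (.var x) k = if x = k then u else .var x := by rw [subst]

theorem subst_mu (u b k) : subst u (.mu b) k = .mu (subst u b (k + 1)) := by rw [subst]

theorem ClosedAbove.mono : ∀ {t n m}, ClosedAbove t n → n ≤ m → ClosedAbove t m := by
  intro t n m h
  induction h generalizing m with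
  | one => intro _; exact .one _
  | ext l n _ ih => intro hm; exact .ext _ _ fun p hp => ih p hp hm
  | int l n _ ih => intro hm; exact .int _ _ fun p hp => ih p hp hm
  | var x n hx => intro hm; exact .var _ _ (by omega)
  | mu b n _ ih => intro hm; exact .mu _ _ (ih (by omega))

theorem subst_of_closed (u : SC) {t n} (h : t.ClosedAbove n) :
    ∀ k, n ≤ k → subst u t k = t := by
  induction h with
  | one => intro k _; rw [subst]
  | ext l n _ ih =>
    intro k hk; rw [subst_ext]
    conv_rhs => rw [← List.map_id l]
    refine congrArg _ (List.map_congr_left fun p hp => ?_)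
    rw [ih p hp k hk]; rfl
  | int l n _ ih =>
    intro k hk; rw [subst_int]
    conv_rhs => rw [← List.map_id l]
    refine congrArg _ (List.map_congr_left fun p hp => ?_)
    rw [ih p hp k hk]; rfl
  | var x n hx => intro k hk; rw [subst_var, if_neg (by omega)]
  | mu b n _ ih => intro k hk; rw [subst_mu, ih (k + 1) (by omega)]

theorem msub_of_closed {t n} (h : t.ClosedAbove n) :
    ∀ ρ k, n ≤ k → msub t ρ k = t := by
  induction h with
  | one => intro ρ k _; rw [msub_one]
  | ext l n _ ih =>
    intro ρ k hk; rw [msub_ext]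
    conv_rhs => rw [← List.map_id l]
    refine congrArg _ (List.map_congr_left fun p hp => ?_)
    rw [ih p hp ρ k hk]; rfl
  | int l n _ ih =>
    intro ρ k hk; rw [msub_int]
    conv_rhs => rw [← List.map_id l]
    refine congrArg _ (List.map_congr_left fun p hp => ?_)
    rw [ih p hp ρ k hk]; rfl
  | var x n hx => intro ρ k hk; rw [msub_var, if_pos (by omega)]
  | mu b n _ ih => intro ρ k hk; rw [msub_mu, ih ρ (k + 1) (by omega)]

theorem msub_closedAbove {ρ : List SC} (hρ : ∀ s ∈ ρ, s.ClosedAbove 0) :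
    ∀ {t n}, t.ClosedAbove n → ∀ k, n = k + ρ.length → (msub t ρ k).ClosedAbove k := by
  intro t n h
  induction h with
  | one => intro k _; rw [msub_one]; exact .one _
  | ext l n _ ih =>
    intro k hn; rw [msub_ext]
    refine .ext _ _ fun p hp => ?_
    obtain ⟨q, hq, rfl⟩ := List.mem_map.1 hp
    exact ih q hq k hn
  | int l n _ ih =>
    intro k hn; rw [msub_int]
    refine .int _ _ fun p hp => ?_
    obtain ⟨q, hq, rfl⟩ := List.mem_map.1 hp
    exact ih q hq k hn
  | var x n hx =>
    intro k hn; rw [msub_var]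
    by_cases hxk : x < k
    · rw [if_pos hxk]; exact .var _ _ hxk
    · rw [if_neg hxk]
      have hlt : x - k < ρ.length := by omega
      rw [List.getD_eq_getElem _ _ hlt]
      exact ((hρ _ (List.getElem_mem hlt)).mono (by omega))
  | mu b n _ ih =>
    intro k hn; rw [msub_mu]
    exact .mu _ _ (ih (k + 1) (by omega))

/-- Key folding lemma: unfolding a parallel-substituted `mu` is again a parallel
substitution with an extended environment. -/
theorem subst_msub (u : SC) (hu : u.ClosedAbove 0) (ρ : List SC)
    (hρ : ∀ s ∈ ρ, s.ClosedAbove 0) :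
    ∀ t k, subst u (msub t ρ (k + 1)) k = msub t (u :: ρ) k
  | .one, k => by rw [msub_one, msub_one, subst]
  | .ext l, k => by
    rw [msub_ext, subst_ext, msub_ext, List.map_map]
    exact congrArg _ (List.map_congr_left fun p hp => by
      simp [Function.comp, subst_msub u hu ρ hρ p.2 k])
  | .int l, k => by
    rw [msub_int, subst_int, msub_int, List.map_map]
    exact congrArg _ (List.map_congr_left fun p hp => by
      simp [Function.comp, subst_msub u hu ρ hρ p.2 k])
  | .var x, k => by
    rw [msub_var, msub_var]
    rcases lt_trichotomy x k with hx | rfl | hx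
    · rw [if_pos (by omega), if_pos hx, subst_var, if_neg (by omega)]
    · rw [if_pos (by omega), if_neg (by omega), subst_var, if_pos rfl]
      simp
    · rw [if_neg (by omega), if_neg (by omega)]
      have hxe : x - k = (x - (k + 1)) + 1 := by omega
      rw [hxe, List.getD_cons_succ]
      by_cases hlt : x - (k + 1) < ρ.length
      · rw [List.getD_eq_getElem _ _ hlt]
        exact subst_of_closed u (hρ _ (List.getElem_mem hlt)) k (by omega)
      · have hd : ρ.getD (x - (k + 1)) (SC.var x) = SC.var x :=
          List.getD_eq_default _ _ (by omega)
        rw [hd, subst_var, if_neg (by omega)]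
  | .mu b, k => by
    rw [msub_mu, subst_mu, msub_mu, subst_msub u hu ρ hρ b (k + 1)]
termination_by t _ => sizeOf t
decreasing_by
  · obtain ⟨a1, s1⟩ := p
    have := List.sizeOf_lt_of_mem hp
    simp_wf; simp at this; omega
  · obtain ⟨a1, s1⟩ := p
    have := List.sizeOf_lt_of_mem hp
    simp_wf; simp at this; omega
  · simp_wf

/-- A finite over-approximation of the terms reachable from `msub t ρ 0`. -/
def cl : SC → List SC → Set SC
  | .one, _ => {.one}
  | .ext l, ρ => {msub (.ext l) ρ 0} ∪ ⋃ p ∈ l.attach, cl p.1.2 ρ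
  | .int l, ρ =>
      {msub (.int l) ρ 0} ∪ ⋃ p ∈ l.attach, ({msub (.int [p.1]) ρ 0} ∪ cl p.1.2 ρ)
  | .var x, ρ => {msub (.var x) ρ 0}
  | .mu b, ρ => {msub (.mu b) ρ 0} ∪ cl b (msub (.mu b) ρ 0 :: ρ)
termination_by t _ => sizeOf t
decreasing_by
  · obtain ⟨⟨a1, s1⟩, hp⟩ := p
    have := List.sizeOf_lt_of_mem hp
    simp_wf; simp at this; omega
  · obtain ⟨⟨a1, s1⟩, hp⟩ := p
    have := List.sizeOf_lt_of_mem hp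
    simp_wf; simp at this; omega
  · simp_wf


theorem cl_one (ρ) : cl .one ρ = {SC.one} := by rw [cl]

theorem cl_ext (l ρ) :
    cl (.ext l) ρ = {msub (.ext l) ρ 0} ∪ ⋃ p ∈ l.attach, cl p.1.2 ρ := by rw [cl]

theorem cl_int (l ρ) :
    cl (.int l) ρ =
      {msub (.int l) ρ 0} ∪ ⋃ p ∈ l.attach, ({msub (.int [p.1]) ρ 0} ∪ cl p.1.2 ρ) := by
  rw [cl]

theorem cl_var (x ρ) : cl (.var x) ρ = {msub (.var x) ρ 0} := by rw [cl]

theorem cl_mu (b ρ) :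
    cl (.mu b) ρ = {msub (.mu b) ρ 0} ∪ cl b (msub (.mu b) ρ 0 :: ρ) := by rw [cl]

theorem cl_finite : ∀ (t : SC) (ρ : List SC), (cl t ρ).Finite
  | .one, ρ => by rw [cl]; exact Set.finite_singleton _
  | .ext l, ρ => by
    rw [cl]
    refine (Set.finite_singleton _).union ?_
    exact Set.Finite.biUnion l.attach.finite_toSet fun p _ => cl_finite p.1.2 ρ
  | .int l, ρ => by
    rw [cl]
    refine (Set.finite_singleton _).union ?_
    exact Set.Finite.biUnion l.attach.finite_toSet fun p _ =>
      (Set.finite_singleton _).union (cl_finite p.1.2 ρ)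
  | .var x, ρ => by rw [cl]; exact Set.finite_singleton _
  | .mu b, ρ => by
    rw [cl]
    exact (Set.finite_singleton _).union (cl_finite b _)
termination_by t _ => sizeOf t
decreasing_by
  · obtain ⟨⟨a1, s1⟩, hp⟩ := p
    have := List.sizeOf_lt_of_mem hp
    simp_wf; simp at this; omega
  · obtain ⟨⟨a1, s1⟩, hp⟩ := p
    have := List.sizeOf_lt_of_mem hp
    simp_wf; simp at this; omega
  · simp_wf

theorem mem_cl_self (t : SC) (ρ : List SC) : msub t ρ 0 ∈ cl t ρ := by
  cases t <;> simp [cl_one, cl_ext, cl_int, cl_var, cl_mu, msub_one]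

theorem cl_ext_sub {p : Name × SC} {l} (hp : p ∈ l) (ρ) :
    cl p.2 ρ ⊆ cl (.ext l) ρ := by
  rw [cl_ext]
  intro y hy
  exact Or.inr (Set.mem_biUnion (List.mem_attach l ⟨p, hp⟩) hy)

theorem cl_int_sub {p : Name × SC} {l} (hp : p ∈ l) (ρ) :
    cl p.2 ρ ⊆ cl (.int l) ρ := by
  rw [cl_int]
  intro y hy
  exact Or.inr (Set.mem_biUnion (List.mem_attach l ⟨p, hp⟩) (Or.inr hy))

theorem mem_cl_int_single {p : Name × SC} {l} (hp : p ∈ l) (ρ) :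
    msub (.int [p]) ρ 0 ∈ cl (.int l) ρ := by
  rw [cl_int]
  exact Or.inr (Set.mem_biUnion (List.mem_attach l ⟨p, hp⟩) (Or.inl rfl))

theorem cl_int_single_sub {p : Name × SC} {l} (hp : p ∈ l) (ρ) :
    cl (.int [p]) ρ ⊆ cl (.int l) ρ := by
  intro y hy
  rw [cl_int] at hy
  rcases hy with hy | hy
  · exact hy ▸ mem_cl_int_single hp ρ
  · simp only [Set.mem_iUnion] at hy
    obtain ⟨q, _, hy⟩ := hy
    have hq : q.1 = p := by
      have := q.2; simpa using this
    rcases hy with hy | hy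
    · rw [hq] at hy; exact hy ▸ mem_cl_int_single hp ρ
    · rw [hq] at hy; exact cl_int_sub hp ρ hy

theorem cl_mu_sub (b ρ) : cl b (msub (.mu b) ρ 0 :: ρ) ⊆ cl (.mu b) ρ := by
  rw [cl_mu]; exact Set.subset_union_right

theorem mem_cl_mu (b ρ) : msub (.mu b) ρ 0 ∈ cl (.mu b) ρ := mem_cl_self _ _

/-- Good environments relative to an ambient set `T`. -/
inductive GE (T : Set SC) : List SC → Prop where
  | nil : GE T []
  | cons : ∀ b ρ, GE T ρ → SC.ClosedAbove b (ρ.length + 1) → cl (.mu b) ρ ⊆ T →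
      GE T (msub (.mu b) ρ 0 :: ρ)

theorem GE.closed {T ρ} (h : GE T ρ) : ∀ s ∈ ρ, s.ClosedAbove 0 := by
  induction h with
  | nil => intro s hs; simp at hs
  | cons b ρ _ hcb _ ih =>
    intro s hs
    rcases List.mem_cons.1 hs with rfl | hs
    · exact msub_closedAbove ih (ClosedAbove.mu b _ hcb) 0 (by omega)
    · exact ih s hs

theorem GE.getD {T ρ} (h : GE T ρ) : ∀ x, x < ρ.length →
    ∃ b ρ', GE T ρ' ∧ SC.ClosedAbove b (ρ'.length + 1) ∧ cl (.mu b) ρ' ⊆ T ∧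
      ρ.getD x SC.one = msub (.mu b) ρ' 0 := by
  induction h with
  | nil => intro x hx; simp at hx
  | cons b ρ hGE hcb hsub ih =>
    intro x hx
    match x with
    | 0 => exact ⟨b, ρ, hGE, hcb, hsub, rfl⟩
    | x + 1 =>
      simp only [List.getD_cons_succ]
      exact ih x (by simpa using hx)

theorem rep_var_mu {T : Set SC} {ρ : List SC} {x : ℕ} (hGE : GE T ρ) (hx : x < ρ.length) :
    ∃ b ρ', GE T ρ' ∧ SC.ClosedAbove b (ρ'.length + 1) ∧ cl (.mu b) ρ' ⊆ T ∧
      msub (.var x) ρ 0 = msub (.mu b) ρ' 0 := by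
  obtain ⟨b, ρ', h1, h2, h3, he⟩ := hGE.getD x hx
  refine ⟨b, ρ', h1, h2, h3, ?_⟩
  rw [msub_var, if_neg (by omega), Nat.sub_zero, List.getD_eq_getElem _ _ hx]
  rw [List.getD_eq_getElem _ _ hx] at he
  exact he

theorem tau_rep : ∀ {s s' : SC}, SC.Tau s s' → ∀ (T : Set SC) (t : SC) (ρ : List SC),
    GE T ρ → t.ClosedAbove ρ.length → cl t ρ ⊆ T → s = msub t ρ 0 →
    ∃ t' ρ', GE T ρ' ∧ t'.ClosedAbove ρ'.length ∧ cl t' ρ' ⊆ T ∧ s' = msub t' ρ' 0 := by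
  intro s s' h
  induction h with
  | int l p hp =>
    intro T t ρ hGE hca hsub heq
    cases t with
    | one => rw [msub_one] at heq; exact absurd heq (by simp)
    | ext l0 => rw [msub_ext] at heq; exact absurd heq (by simp)
    | var x =>
      have hx : x < ρ.length := by cases hca; assumption
      obtain ⟨b, ρ', _, _, _, he⟩ := rep_var_mu hGE hx
      rw [he, msub_mu] at heq
      exact absurd heq (by simp)
    | int l0 =>
      rw [msub_int] at heq
      injection heq with hl
      obtain ⟨q, hq, hfq⟩ := List.mem_map.1 (hl ▸ hp)
      refine ⟨.int [q], ρ, hGE, ?_, (cl_int_single_sub hq ρ).trans hsub, ?_⟩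
      · refine .int _ _ fun p' hp' => ?_
        have hpq : p' = q := by simpa using hp'
        rw [hpq]
        cases hca with | int _ _ h => exact h q hq
      · rw [msub_int]
        simp only [List.map_cons, List.map_nil]
        rw [hfq]
    | mu b => rw [msub_mu] at heq; exact absurd heq (by simp)
  | unfold b0 σ' hstep ih =>
    intro T t ρ hGE hca hsub heq
    have hrep : ∃ b ρ', GE T ρ' ∧ SC.ClosedAbove b (ρ'.length + 1) ∧ cl (.mu b) ρ' ⊆ T ∧
        SC.mu b0 = msub (.mu b) ρ' 0 := by
      cases t with
      | one => rw [msub_one] at heq; exact absurd heq (by simp)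
      | ext l0 => rw [msub_ext] at heq; exact absurd heq (by simp)
      | int l0 => rw [msub_int] at heq; exact absurd heq (by simp)
      | var x =>
        have hx : x < ρ.length := by cases hca; assumption
        obtain ⟨b, ρ', h1, h2, h3, he⟩ := rep_var_mu hGE hx
        exact ⟨b, ρ', h1, h2, h3, he ▸ heq⟩
      | mu b =>
        have hcb : SC.ClosedAbove b (ρ.length + 1) := by cases hca; assumption
        exact ⟨b, ρ, hGE, hcb, hsub, heq⟩
    obtain ⟨b, ρ', h1, h2, h3, he⟩ := hrep
    rw [msub_mu] at he
    injection he with hb0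
    have hρ' := h1.closed
    have hu : (msub (.mu b) ρ' 0).ClosedAbove 0 :=
      msub_closedAbove hρ' (.mu _ _ h2) 0 (by omega)
    apply ih T b (msub (.mu b) ρ' 0 :: ρ')
    · exact .cons b ρ' h1 h2 h3
    · simpa using h2
    · exact (cl_mu_sub b ρ').trans h3
    · show SC.unfold b0 = _
      rw [SC.unfold, hb0]
      have hmu : SC.mu (msub b ρ' 1) = msub (.mu b) ρ' 0 := (msub_mu b ρ' 0).symm
      rw [hmu]
      exact subst_msub _ hu ρ' hρ' b 0

theorem step_rep : ∀ {s : SC} {α : Act} {s' : SC}, SC.Step s α s' →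
    ∀ (T : Set SC) (t : SC) (ρ : List SC),
    GE T ρ → t.ClosedAbove ρ.length → cl t ρ ⊆ T → s = msub t ρ 0 →
    ∃ t' ρ', GE T ρ' ∧ t'.ClosedAbove ρ'.length ∧ cl t' ρ' ⊆ T ∧ s' = msub t' ρ' 0 := by
  intro s α s' h
  induction h with
  | ext l a σ0 hmem =>
    intro T t ρ hGE hca hsub heq
    cases t with
    | one => rw [msub_one] at heq; exact absurd heq (by simp)
    | int l0 => rw [msub_int] at heq; exact absurd heq (by simp)
    | var x =>
      have hx : x < ρ.length := by cases hca; assumption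
      obtain ⟨b, ρ', _, _, _, he⟩ := rep_var_mu hGE hx
      rw [he, msub_mu] at heq
      exact absurd heq (by simp)
    | ext l0 =>
      rw [msub_ext] at heq
      injection heq with hl
      obtain ⟨q, hq, hfq⟩ := List.mem_map.1 (hl ▸ hmem)
      refine ⟨q.2, ρ, hGE, ?_, (cl_ext_sub hq ρ).trans hsub, ?_⟩
      · cases hca with | ext _ _ h => exact h q hq
      · injection hfq with h1 h2
        exact h2.symm
    | mu b => rw [msub_mu] at heq; exact absurd heq (by simp)
  | out a σ0 =>
    intro T t ρ hGE hca hsub heq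
    cases t with
    | one => rw [msub_one] at heq; exact absurd heq (by simp)
    | ext l0 => rw [msub_ext] at heq; exact absurd heq (by simp)
    | var x =>
      have hx : x < ρ.length := by cases hca; assumption
      obtain ⟨b, ρ', _, _, _, he⟩ := rep_var_mu hGE hx
      rw [he, msub_mu] at heq
      exact absurd heq (by simp)
    | mu b => rw [msub_mu] at heq; exact absurd heq (by simp)
    | int l0 =>
      rw [msub_int] at heq
      injection heq with hl
      cases l0 with
      | nil => simp at hl
      | cons q rest =>
        rw [List.map_cons] at hl
        injection hl with h1 h2
        have hrest : rest = [] := by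
          cases rest with
          | nil => rfl
          | cons r rs => simp at h2
        subst hrest
        injection h1 with ha hσ
        refine ⟨q.2, ρ, hGE, ?_, (cl_int_sub (l := [q]) (by simp) ρ).trans hsub, hσ⟩
        cases hca with | int _ _ h => exact h q (by simp)
  | unfold b0 α σ' hstep ih =>
    intro T t ρ hGE hca hsub heq
    have hrep : ∃ b ρ', GE T ρ' ∧ SC.ClosedAbove b (ρ'.length + 1) ∧ cl (.mu b) ρ' ⊆ T ∧
        SC.mu b0 = msub (.mu b) ρ' 0 := by
      cases t with
      | one => rw [msub_one] at heq; exact absurd heq (by simp)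
      | ext l0 => rw [msub_ext] at heq; exact absurd heq (by simp)
      | int l0 => rw [msub_int] at heq; exact absurd heq (by simp)
      | var x =>
        have hx : x < ρ.length := by cases hca; assumption
        obtain ⟨b, ρ', h1, h2, h3, he⟩ := rep_var_mu hGE hx
        exact ⟨b, ρ', h1, h2, h3, he ▸ heq⟩
      | mu b =>
        have hcb : SC.ClosedAbove b (ρ.length + 1) := by cases hca; assumption
        exact ⟨b, ρ, hGE, hcb, hsub, heq⟩
    obtain ⟨b, ρ', h1, h2, h3, he⟩ := hrep
    rw [msub_mu] at he
    injection he with hb0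
    have hρ' := h1.closed
    have hu : (msub (.mu b) ρ' 0).ClosedAbove 0 :=
      msub_closedAbove hρ' (.mu _ _ h2) 0 (by omega)
    apply ih T b (msub (.mu b) ρ' 0 :: ρ')
    · exact .cons b ρ' h1 h2 h3
    · simpa using h2
    · exact (cl_mu_sub b ρ').trans h3
    · show SC.unfold b0 = _
      rw [SC.unfold, hb0]
      have hmu : SC.mu (msub b ρ' 1) = msub (.mu b) ρ' 0 := (msub_mu b ρ' 0).symm
      rw [hmu]
      exact subst_msub _ hu ρ' hρ' b 0

theorem any_rep {s s' : SC} (h : SC.AnyStep s s') :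
    ∀ (T : Set SC) (t : SC) (ρ : List SC),
    GE T ρ → t.ClosedAbove ρ.length → cl t ρ ⊆ T → s = msub t ρ 0 →
    ∃ t' ρ', GE T ρ' ∧ t'.ClosedAbove ρ'.length ∧ cl t' ρ' ⊆ T ∧ s' = msub t' ρ' 0 := by
  cases h with
  | tau _ h => exact tau_rep h
  | act _ _ h => exact step_rep h

end SC

/-- For every session contract σ, the set of session contracts reachable
from σ under the reflexive–transitive closure of its LTS is finite. -/
theorem reachable_set_finite :
    ∀ σ : SC, IsContract σ →
      {σ' | Relation.ReflTransGen SC.AnyStep σ σ'}.Finite := by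
  intro σ hσ
  refine Set.Finite.subset (SC.cl_finite σ []) ?_
  intro σ' hσ'
  simp only [Set.mem_setOf_eq] at hσ'
  have key : ∃ t ρ, SC.GE (SC.cl σ []) ρ ∧ t.ClosedAbove ρ.length ∧
      SC.cl t ρ ⊆ SC.cl σ [] ∧ σ' = SC.msub t ρ 0 := by
    induction hσ' with
    | refl =>
      exact ⟨σ, [], .nil, by simpa using hσ.1, subset_rfl,
        (SC.msub_of_closed hσ.1 [] 0 le_rfl).symm⟩
    | tail _ hstep ih =>
      obtain ⟨t, ρ, h1, h2, h3, h4⟩ := ih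
      exact SC.any_rep hstep _ t ρ h1 h2 h3 h4
  obtain ⟨t, ρ, _, _, h3, h4⟩ := key
  exact h3 (by rw [h4]; exact SC.mem_cl_self t ρ)
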